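/- Let n, r ∈ ℕ with r ≥ 3 and n = kr for some k ≥ 2, and let D ∈ ℕ with n/(r−1) ≤ D ≤ n − r. Then there exists a graph G_2 on n vertices with maximum degree Δ(G_2) = D and exactly D + e(\overline{T}(n−D−1, r−2)) edges such that G_2 has no equitable (n/r)-colouring. (One may take G_2 to be the disjoint union of the star K_{1,D} and the complement of the Turán graph T(n−D−1, r−2).) -/

import Mathlib

/-- The number of edges of a graph. -/
noncomputable def edgeCount {V : Type*} (G : SimpleGraph V) : ℕ := Nat.card G.edgeSet

/-- The degree of a vertex. -/
noncomputable def deg {V : Type*} (G : SimpleGraph V) (v : V) : ℕ := Nat.card (G.neighborSet v)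

/-- An equitable `k`-colouring: a proper colouring with `k` colours whose colour classes
differ in size by at most one. -/
def HasEquitableColoring {n : ℕ} (G : SimpleGraph (Fin n)) (k : ℕ) : Prop :=
  ∃ c : Fin n → Fin k,
    (∀ u v, G.Adj u v → c u ≠ c v) ∧
    ∀ i j : Fin k, (Finset.univ.filter fun v => c v = i).card ≤
      (Finset.univ.filter fun v => c v = j).card + 1

open SimpleGraph Finset

section Helpers

variable {α β : Type*}

lemma deg_iso {G : SimpleGraph α} {H : SimpleGraph β} (f : G ≃g H) (v : α) :
    deg H (f v) = deg G v := (Nat.card_congr (f.mapNeighborSet v)).symm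

lemma edgeCount_iso {G : SimpleGraph α} {H : SimpleGraph β} (f : G ≃g H) :
    edgeCount G = edgeCount H := Nat.card_congr f.mapEdgeSet

lemma deg_sum_inl (G : SimpleGraph α) (H : SimpleGraph β) (u : α) :
    deg (G ⊕g H) (Sum.inl u) = deg G u := by
  have hset : (G ⊕g H).neighborSet (Sum.inl u) = Sum.inl '' (G.neighborSet u) := by
    ext w
    cases w with
    | inl a => simp [mem_neighborSet]
    | inr b => simp [mem_neighborSet]
  rw [deg, hset, Nat.card_image_of_injective Sum.inl_injective, deg]

lemma deg_sum_inr (G : SimpleGraph α) (H : SimpleGraph β) (u : β) :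
    deg (G ⊕g H) (Sum.inr u) = deg H u := by
  have hset : (G ⊕g H).neighborSet (Sum.inr u) = Sum.inr '' (H.neighborSet u) := by
    ext w
    cases w with
    | inl a => simp [mem_neighborSet]
    | inr b => simp [mem_neighborSet]
  rw [deg, hset, Nat.card_image_of_injective Sum.inr_injective, deg]

lemma deg_eq_degree [Fintype α] (G : SimpleGraph α) [DecidableRel G.Adj] (v : α) :
    deg G v = G.degree v := by
  rw [deg, ← card_neighborSet_eq_degree]; exact Nat.card_eq_fintype_card

lemma edgeCount_eq_card [Fintype α] [DecidableEq α] (G : SimpleGraph α) [DecidableRel G.Adj] :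
    edgeCount G = G.edgeFinset.card := by
  rw [edgeCount, edgeFinset_card]; exact Nat.card_eq_fintype_card

lemma two_mul_edgeCount [Fintype α] (G : SimpleGraph α) :
    2 * edgeCount G = ∑ v, deg G v := by
  classical
  rw [edgeCount_eq_card G, ← sum_degrees_eq_twice_card_edges]
  exact (Finset.sum_congr rfl fun v _ => (deg_eq_degree G v)).symm

lemma edgeCount_sum [Fintype α] [Fintype β] (G : SimpleGraph α) (H : SimpleGraph β) :
    edgeCount (G ⊕g H) = edgeCount G + edgeCount H := by
  have h : 2 * edgeCount (G ⊕g H) = 2 * (edgeCount G + edgeCount H) := by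
    rw [two_mul_edgeCount, Fintype.sum_sum_type, mul_add, two_mul_edgeCount, two_mul_edgeCount]
    congr 1
    · exact Finset.sum_congr rfl fun u _ => deg_sum_inl G H u
    · exact Finset.sum_congr rfl fun u _ => deg_sum_inr G H u
  omega

lemma star_deg_center (D : ℕ) (a : Fin 1) :
    deg (completeBipartiteGraph (Fin 1) (Fin D)) (Sum.inl a) = D := by
  have hset : (completeBipartiteGraph (Fin 1) (Fin D)).neighborSet (Sum.inl a)
      = Set.range Sum.inr := by
    ext w
    cases w with
    | inl x => simp [mem_neighborSet]
    | inr y => simp [mem_neighborSet]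
  rw [deg, hset, Nat.card_range_of_injective Sum.inr_injective, Nat.card_eq_fintype_card,
    Fintype.card_fin]

lemma star_deg_leaf (D : ℕ) (b : Fin D) :
    deg (completeBipartiteGraph (Fin 1) (Fin D)) (Sum.inr b) = 1 := by
  have hset : (completeBipartiteGraph (Fin 1) (Fin D)).neighborSet (Sum.inr b)
      = {Sum.inl 0} := by
    ext w
    cases w with
    | inl x => simp [mem_neighborSet, Subsingleton.elim x 0]
    | inr y => simp [mem_neighborSet]
  rw [deg, hset]
  simp

lemma star_edgeCount (D : ℕ) :
    edgeCount (completeBipartiteGraph (Fin 1) (Fin D)) = D := by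
  have h := two_mul_edgeCount (completeBipartiteGraph (Fin 1) (Fin D))
  rw [Fintype.sum_sum_type] at h
  simp only [star_deg_center, star_deg_leaf] at h
  simp only [Finset.sum_const, Finset.card_univ, Fintype.card_fin, smul_eq_mul] at h
  omega

lemma turanCompl_deg_le (m s : ℕ) (v : Fin m) :
    deg ((turanGraph m s)ᶜ) v ≤ m / s := by
  classical
  rw [deg_eq_degree]
  have hmem : ∀ w : Fin m, ((turanGraph m s)ᶜ).Adj v w →
      (w : ℕ) % s = (v : ℕ) % s ∧ (w : ℕ) ≠ (v : ℕ) := by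
    intro w hw
    rw [compl_adj] at hw
    obtain ⟨hne, hnadj⟩ := hw
    constructor
    · by_contra hmod
      exact hnadj (by simpa [turanGraph] using (Ne.symm hmod))
    · intro h; exact hne (Fin.ext h.symm)
  have hdivne : ∀ w : Fin m, ((turanGraph m s)ᶜ).Adj v w → (w : ℕ) / s ≠ (v : ℕ) / s := by
    intro w hw hdiv
    obtain ⟨hmod, hne⟩ := hmem w hw
    apply hne
    calc (w : ℕ) = s * ((w : ℕ) / s) + (w : ℕ) % s := (Nat.div_add_mod _ s).symm
      _ = s * ((v : ℕ) / s) + (v : ℕ) % s := by rw [hdiv, hmod]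
      _ = (v : ℕ) := Nat.div_add_mod _ s
  have hvle : (v : ℕ) / s ≤ m / s := Nat.div_le_div_right (le_of_lt v.isLt)
  have hwle : ∀ w : Fin m, (w : ℕ) / s ≤ m / s :=
    fun w => Nat.div_le_div_right (le_of_lt w.isLt)
  have key : (((turanGraph m s)ᶜ).neighborFinset v).card ≤ (Finset.range (m / s)).card := by
    apply Finset.card_le_card_of_injOn
      (fun w : Fin m => if (w : ℕ) / s < (v : ℕ) / s then (w : ℕ) / s else (w : ℕ) / s - 1)
    · intro w hw
      rw [Finset.mem_coe, mem_neighborFinset] at hw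
      have h1 := hdivne w hw
      have h2 := hwle w
      have h3 := hvle
      rw [Finset.mem_coe, Finset.mem_range]
      beta_reduce
      generalize (w : ℕ) / s = qw at h1 h2 ⊢
      generalize (v : ℕ) / s = qv at h1 h3 ⊢
      generalize m / s = qm at h2 h3 ⊢
      split <;> omega
    · intro w1 hw1 w2 hw2 heq
      rw [Finset.mem_coe, mem_neighborFinset] at hw1 hw2
      have hd1 := hdivne w1 hw1
      have hd2 := hdivne w2 hw2
      have hl1 := hwle w1
      have hl2 := hwle w2
      have hm1 := (hmem w1 hw1).1
      have hm2 := (hmem w2 hw2).1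
      have hdiv : (w1 : ℕ) / s = (w2 : ℕ) / s := by
        dsimp only at heq
        generalize hg1 : (w1 : ℕ) / s = q1 at hd1 hl1 heq ⊢
        generalize hg2 : (w2 : ℕ) / s = q2 at hd2 hl2 heq ⊢
        generalize (v : ℕ) / s = qv at hd1 hd2 hvle heq
        generalize m / s = qm at hl1 hl2 hvle
        split_ifs at heq <;> omega
      apply Fin.ext
      calc (w1 : ℕ) = s * ((w1 : ℕ) / s) + (w1 : ℕ) % s := (Nat.div_add_mod _ s).symm
        _ = s * ((w2 : ℕ) / s) + (w2 : ℕ) % s := by rw [hdiv, hm1, hm2]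
        _ = (w2 : ℕ) := Nat.div_add_mod _ s
  calc ((turanGraph m s)ᶜ).degree v = (((turanGraph m s)ᶜ).neighborFinset v).card := rfl
    _ ≤ (Finset.range (m / s)).card := key
    _ = m / s := Finset.card_range _

lemma deg_comap_equiv (e : α ≃ β) (G : SimpleGraph β) (v : α) :
    deg (G.comap e) v = deg G (e v) :=
  (deg_iso (⟨e, Iff.rfl⟩ : G.comap e ≃g G) v).symm

lemma edgeCount_comap_equiv (e : α ≃ β) (G : SimpleGraph β) :
    edgeCount (G.comap e) = edgeCount G :=
  edgeCount_iso (⟨e, Iff.rfl⟩ : G.comap e ≃g G)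

end Helpers

/-- Let `r ≥ 3` and `n = k r` with `k ≥ 2`, and let `n/(r-1) ≤ D ≤ n - r` (the lower bound
written multiplicatively as `n ≤ D (r-1)`). There is a graph `G₂` on `n` vertices with
maximum degree exactly `D` and exactly `D + e(T̄(n-D-1, r-2))` edges which has no equitable
`n/r`-colouring. -/
theorem stmt6 (n r D : ℕ) (hr : 3 ≤ r) (hk : ∃ k : ℕ, 2 ≤ k ∧ n = k * r)
    (hD1 : n ≤ D * (r - 1)) (hD2 : D ≤ n - r) :
    ∃ G₂ : SimpleGraph (Fin n),
      (∀ v, deg G₂ v ≤ D) ∧ (∃ v, deg G₂ v = D) ∧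
      edgeCount G₂ = D + edgeCount ((SimpleGraph.turanGraph (n - D - 1) (r - 2))ᶜ) ∧
      ¬ HasEquitableColoring G₂ (n / r) := by
  classical
  obtain ⟨k, hk2, hkn⟩ := hk
  have hr0 : 0 < r := by omega
  have hn2r : 2 * r ≤ n := by rw [hkn]; exact Nat.mul_le_mul_right r hk2
  have hD0 : 1 ≤ D := by
    rcases Nat.eq_zero_or_pos D with h | h
    · subst h; simp at hD1; omega
    · exact h
  have hs1 : 1 ≤ r - 2 := by omega
  have hDn : D + 1 ≤ n := by omega
  have heq : n = (1 + D) + (n - D - 1) := by omega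
  have hmsD : (n - D - 1) / (r - 2) ≤ D := by
    have hds : D * (r - 1) = D * (r - 2) + D := by
      have h2 : r - 1 = (r - 2) + 1 := by omega
      rw [h2, Nat.mul_succ]
    have hlt : n - D - 1 < D * (r - 2) := by omega
    exact le_of_lt ((Nat.div_lt_iff_lt_mul (by omega)).mpr hlt)
  -- the construction
  let e : Fin n ≃ (Fin 1 ⊕ Fin D) ⊕ Fin (n - D - 1) :=
    (finCongr heq).trans (finSumFinEquiv.symm.trans
      (Equiv.sumCongr finSumFinEquiv.symm (Equiv.refl (Fin (n - D - 1)))))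
  refine ⟨SimpleGraph.comap e
    (completeBipartiteGraph (Fin 1) (Fin D) ⊕g (turanGraph (n - D - 1) (r - 2))ᶜ), ?_, ?_, ?_, ?_⟩
  · -- max degree at most D
    intro v
    rw [deg_comap_equiv]
    rcases he : e v with (a | b) | z
    · rw [deg_sum_inl, star_deg_center]
    · rw [deg_sum_inl, star_deg_leaf]; exact hD0
    · rw [deg_sum_inr]
      exact (turanCompl_deg_le (n - D - 1) (r - 2) z).trans hmsD
  · -- a vertex of degree D
    refine ⟨e.symm (Sum.inl (Sum.inl 0)), ?_⟩
    rw [deg_comap_equiv, e.apply_symm_apply, deg_sum_inl, star_deg_center]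
  · -- edge count
    rw [edgeCount_comap_equiv, edgeCount_sum, star_edgeCount]
  · -- no equitable colouring
    rintro ⟨c, hprop, hequit⟩
    have hnr : n / r = k := by rw [hkn, Nat.mul_div_cancel _ hr0]
    have hsum : ∑ i : Fin (n / r), (Finset.univ.filter fun v => c v = i).card = n := by
      have h := Finset.card_eq_sum_card_fiberwise
        (f := c) (s := Finset.univ) (t := Finset.univ) (fun x _ => Finset.mem_univ (c x))
      simpa using h.symm
    have hclass : ∀ i : Fin (n / r), r ≤ (Finset.univ.filter fun v => c v = i).card := by
      by_contra hcon
      push_neg at hcon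
      obtain ⟨i₀, hi₀⟩ := hcon
      have hle : ∀ j : Fin (n / r), (Finset.univ.filter fun v => c v = j).card ≤ r :=
        fun j => le_trans (hequit j i₀) (by omega)
      have hsplit : (∑ j ∈ Finset.univ.erase i₀, (Finset.univ.filter fun v => c v = j).card)
          + (Finset.univ.filter fun v => c v = i₀).card = n := by
        rw [Finset.sum_erase_add _ _ (Finset.mem_univ i₀)]; exact hsum
      have hbound : (∑ j ∈ Finset.univ.erase i₀, (Finset.univ.filter fun v => c v = j).card)
          ≤ (n / r - 1) * r := by
        have h := Finset.sum_le_card_nsmul (Finset.univ.erase i₀)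
          (fun j => (Finset.univ.filter fun v => c v = j).card) r (fun j _ => hle j)
        rwa [smul_eq_mul, Finset.card_erase_of_mem (Finset.mem_univ _), Finset.card_univ,
          Fintype.card_fin] at h
      have hkr : (n / r - 1) * r + r = n := by
        have h1 : (n / r - 1) * r = (n / r) * r - r := Nat.sub_one_mul _ r
        have h2 : n / r * r = n := by rw [hnr]; exact hkn.symm
        omega
      omega
    set v₀ := e.symm (Sum.inl (Sum.inl 0)) with hv₀
    set T := Finset.univ.filter (fun v => c v = c v₀) with hT
    have hTcard : r ≤ T.card := hclass (c v₀)
    have hv₀T : v₀ ∈ T := by rw [hT]; simp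
    have hmemT : ∀ v ∈ T.erase v₀, ∃ z : Fin (n - D - 1), e v = Sum.inr z := by
      intro v hv
      rw [Finset.mem_erase] at hv
      obtain ⟨hne, hvT⟩ := hv
      have hcv : c v = c v₀ := by rw [hT] at hvT; simpa using hvT
      rcases he : e v with (a | b) | z
      · exfalso
        apply hne
        apply e.injective
        rw [he, hv₀, e.apply_symm_apply, Subsingleton.elim a 0]
      · exfalso
        have hadj : (SimpleGraph.comap e
            (completeBipartiteGraph (Fin 1) (Fin D)
              ⊕g (turanGraph (n - D - 1) (r - 2))ᶜ)).Adj v v₀ := by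
          rw [comap_adj, he, hv₀, e.apply_symm_apply]
          show (completeBipartiteGraph (Fin 1) (Fin D)).Adj (Sum.inr b) (Sum.inl 0)
          simp
        exact hprop v v₀ hadj hcv
      · exact ⟨z, rfl⟩
    have hcle : (T.erase v₀).card ≤ r - 2 := by
      have h : (T.erase v₀).card ≤ (Finset.range (r - 2)).card := by
        apply Finset.card_le_card_of_injOn
          (fun v => Sum.elim (fun _ => 0)
            (fun z : Fin (n - D - 1) => (z : ℕ) % (r - 2)) (e v))
        · intro v hv
          obtain ⟨z, hz⟩ := hmemT v (Finset.mem_coe.mp hv)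
          simp only [hz, Sum.elim_inr, Finset.mem_coe, Finset.mem_range]
          exact Nat.mod_lt _ (by omega)
        · intro u hu v hv huv
          obtain ⟨zu, hzu⟩ := hmemT u (Finset.mem_coe.mp hu)
          obtain ⟨zv, hzv⟩ := hmemT v (Finset.mem_coe.mp hv)
          by_contra hne
          have hzne : zu ≠ zv := by
            intro h'
            apply hne
            apply e.injective
            rw [hzu, hzv, h']
          have hmod : (zu : ℕ) % (r - 2) = (zv : ℕ) % (r - 2) := by
            dsimp only at huv
            rw [hzu, hzv] at huv
            simpa using huv
          have hadj : (SimpleGraph.comap e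
              (completeBipartiteGraph (Fin 1) (Fin D)
                ⊕g (turanGraph (n - D - 1) (r - 2))ᶜ)).Adj u v := by
            rw [comap_adj, hzu, hzv]
            show ((turanGraph (n - D - 1) (r - 2))ᶜ).Adj zu zv
            rw [compl_adj]
            refine ⟨hzne, fun hA => ?_⟩
            exact (by simpa [turanGraph] using hA :
              (zu : ℕ) % (r - 2) ≠ (zv : ℕ) % (r - 2)) hmod
          have hcu : c u = c v₀ := by
            have := (Finset.mem_erase.mp (Finset.mem_coe.mp hu)).2
            rw [hT] at this
            simpa using this
          have hcv : c v = c v₀ := by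
            have := (Finset.mem_erase.mp (Finset.mem_coe.mp hv)).2
            rw [hT] at this
            simpa using this
          exact hprop u v hadj (hcu.trans hcv.symm)
      simpa using h
    have hTc : (T.erase v₀).card + 1 = T.card := Finset.card_erase_add_one hv₀T
    omega
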